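/- Fix n ≥ 1 and a field k. Let F_n be the n²-dimensional k-vector space with basis {U_{ij} : i, j ∈ ℤ/nℤ}, and for each α ∈ ℤ/nℤ define the linear map Δ_{[α]} : F_n → F_n ⊗ F_n by Δ_{[α]}(U_{ij}) = Σ_{k ∈ ℤ/nℤ} U_{i,k+α} ⊗ U_{k,j}. Then: (1) each Δ_{[α]} is coassociative; (2) for all α, β ∈ ℤ/nℤ, the entanglement equation (Δ_{[α]} ⊗ id) ∘ Δ_{[β]} = (id ⊗ Δ_{[β]}) ∘ Δ_{[α]} holds; and (3) the linear map ε_{[α]} : F_n → k with ε_{[α]}(U_{ij}) = 1 if j = i + α and 0 otherwise satisfies (id ⊗ ε_{[α]}) ∘ Δ_{[α]} = id. -/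

import Mathlib

open TensorProduct

noncomputable section

variable {k V : Type*} [Field k] [AddCommGroup V] [Module k V]

/-- `(Δ' ⊗ id) ∘ Δ` composed with the standard associator, as a map `V → V ⊗ (V ⊗ V)`. -/
def lcomp (Δ' Δ : V →ₗ[k] V ⊗[k] V) : V →ₗ[k] V ⊗[k] (V ⊗[k] V) :=
  (TensorProduct.assoc k V V V).toLinearMap ∘ₗ TensorProduct.map Δ' LinearMap.id ∘ₗ Δ

/-- `(id ⊗ Δ') ∘ Δ` as a map `V → V ⊗ (V ⊗ V)`. -/
def rcomp (Δ' Δ : V →ₗ[k] V ⊗[k] V) : V →ₗ[k] V ⊗[k] (V ⊗[k] V) :=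
  TensorProduct.map LinearMap.id Δ' ∘ₗ Δ

/-- Coassociativity of a coproduct: `(Δ ⊗ id) ∘ Δ = (id ⊗ Δ) ∘ Δ`. -/
def Coassoc (Δ : V →ₗ[k] V ⊗[k] V) : Prop := lcomp Δ Δ = rcomp Δ Δ

/-- `(D, Δ, Δ̃)` is a coassociative co-dialgebra: both coproducts are coassociative,
`(id ⊗ Δ) ∘ Δ = (id ⊗ Δ̃) ∘ Δ`, `(Δ̃ ⊗ id) ∘ Δ̃ = (Δ ⊗ id) ∘ Δ̃`, and the entanglement
equation `(Δ̃ ⊗ id) ∘ Δ = (id ⊗ Δ) ∘ Δ̃` holds. -/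
def CoDialgebra (Δ Δ' : V →ₗ[k] V ⊗[k] V) : Prop :=
  Coassoc Δ ∧ Coassoc Δ' ∧
  rcomp Δ Δ = rcomp Δ' Δ ∧
  lcomp Δ' Δ' = lcomp Δ Δ' ∧
  lcomp Δ' Δ = rcomp Δ Δ'

/-- On `F_n` with basis `{U_{ij} : i, j ∈ ℤ/nℤ}` and coproducts
`Δ_{[α]}(U_{ij}) = Σ_l U_{i,l+α} ⊗ U_{l,j}`: each `Δ_{[α]}` is coassociative, any two of
them satisfy the entanglement equation `(Δ_{[α]} ⊗ id)Δ_{[β]} = (id ⊗ Δ_{[β]})Δ_{[α]}`,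
and `ε_{[α]}(U_{ij}) = δ_{j, i+α}` is a right counit for `Δ_{[α]}`. -/
theorem stmt15 (n : ℕ) (hn : 1 ≤ n) [NeZero n]
    (k F : Type*) [Field k] [AddCommGroup F] [Module k F]
    (U : Module.Basis (ZMod n × ZMod n) k F)
    (Δ : ZMod n → (F →ₗ[k] F ⊗[k] F))
    (hΔ : ∀ α i j, Δ α (U (i, j)) = ∑ l : ZMod n, U (i, l + α) ⊗ₜ[k] U (l, j))
    (ε : ZMod n → (F →ₗ[k] k))
    (hε : ∀ α i j, ε α (U (i, j)) = if j = i + α then 1 else 0) :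
    (∀ α, Coassoc (Δ α)) ∧
    (∀ α β, lcomp (Δ α) (Δ β) = rcomp (Δ β) (Δ α)) ∧
    (∀ α, (TensorProduct.rid k F).toLinearMap ∘ₗ
      TensorProduct.map LinearMap.id (ε α) ∘ₗ Δ α = LinearMap.id) := by
  have key : ∀ α β, lcomp (Δ α) (Δ β) = rcomp (Δ β) (Δ α) := by
    intro α β
    apply U.ext
    rintro ⟨i, j⟩
    simp only [lcomp, rcomp, LinearMap.comp_apply, hΔ, map_sum, TensorProduct.map_tmul,
      LinearMap.id_apply, LinearEquiv.coe_coe, TensorProduct.sum_tmul,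
      TensorProduct.tmul_sum, TensorProduct.assoc_tmul]
    exact Finset.sum_comm
  refine ⟨fun α => key α α, key, fun α => ?_⟩
  apply U.ext
  rintro ⟨i, j⟩
  simp only [LinearMap.comp_apply, hΔ, map_sum, TensorProduct.map_tmul, LinearMap.id_apply,
    LinearEquiv.coe_coe, TensorProduct.rid_tmul, hε]
  rw [Finset.sum_eq_single (j - α)]
  · simp
  · intro b _ hb
    rw [if_neg, zero_smul]
    intro h
    exact hb (by rw [h]; ring)
  · simp
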